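/- The sequence a_n = ((10n)/(3π) · tan(π/(2n)))² for n ≥ 2 is strictly decreasing, the sequence b_n = 1/(2(1 − (π/(2n))·cot(π/(2n)))) for n ≥ 2 is strictly increasing, and a_3 < b_3. -/

import Mathlib

open Real Set

/-- On `(0, π/2)` the function `x ↦ tan x / x` is strictly monotone. -/
lemma tan_div_strictMono : StrictMonoOn (fun z : ℝ => Real.tan z / z) (Ioo 0 (π / 2)) := by
  apply strictMonoOn_of_deriv_pos (convex_Ioo 0 (π / 2))
  · apply ContinuousOn.div
    · exact continuousOn_tan.mono (fun z hz => by
        have : 0 < Real.cos z := Real.cos_pos_of_mem_Ioo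
          ⟨by have := hz.1; linarith [Real.pi_pos], hz.2⟩
        exact this.ne')
    · exact continuousOn_id
    · exact fun z hz => ne_of_gt hz.1
  · intro z hz
    rw [interior_Ioo] at hz
    obtain ⟨hz0, hz2⟩ := hz
    have hcos : 0 < Real.cos z := Real.cos_pos_of_mem_Ioo ⟨by linarith [Real.pi_pos], hz2⟩
    have hd : HasDerivAt (fun z : ℝ => Real.tan z / z)
        ((1 / Real.cos z ^ 2 * z - Real.tan z * 1) / z ^ 2) z :=
      (Real.hasDerivAt_tan hcos.ne').div (hasDerivAt_id z) hz0.ne'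
    rw [hd.deriv]
    have hsin : 0 < Real.sin z := Real.sin_pos_of_pos_of_lt_pi hz0 (by linarith [Real.pi_pos])
    have hslt : Real.sin z < z := Real.sin_lt hz0
    have hcle : Real.cos z ≤ 1 := Real.cos_le_one z
    have hnum : 0 < 1 / Real.cos z ^ 2 * z - Real.tan z * 1 := by
      rw [Real.tan_eq_sin_div_cos]
      rw [show 1 / Real.cos z ^ 2 * z - Real.sin z / Real.cos z * 1
          = (z - Real.sin z * Real.cos z) / Real.cos z ^ 2 by field_simp]
      apply div_pos _ (pow_pos hcos 2)
      nlinarith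
    exact div_pos hnum (pow_pos hz0 2)

lemma tan_div_lt_tan_div {y x : ℝ} (hy : 0 < y) (hyx : y < x) (hx : x < π / 2) :
    Real.tan y / y < Real.tan x / x :=
  tan_div_strictMono ⟨hy, hyx.trans hx⟩ ⟨hy.trans hyx, hx⟩ hyx

lemma one_lt_tan_div {x : ℝ} (hx0 : 0 < x) (hx : x < π / 2) : 1 < Real.tan x / x :=
  (one_lt_div hx0).2 (Real.lt_tan hx0 hx)

lemma cot_mul_eq {x : ℝ} (hx0 : 0 < x) (hx : x < π / 2) :
    x * Real.cot x = 1 / (Real.tan x / x) := by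
  have hsin : Real.sin x ≠ 0 :=
    (Real.sin_pos_of_pos_of_lt_pi hx0 (by linarith [Real.pi_pos])).ne'
  have hcos : Real.cos x ≠ 0 :=
    (Real.cos_pos_of_mem_Ioo ⟨by linarith [Real.pi_pos], hx⟩).ne'
  rw [Real.cot_eq_cos_div_sin, Real.tan_eq_sin_div_cos]
  field_simp

/-- Monotonicity of the two auxiliary sequences in the proof of Theorem 3.5,
together with the crossing inequality a₃ < b₃. -/
theorem aux_sequences_monotone :
    let a : ℕ → ℝ := fun n => ((10 * n) / (3 * Real.pi) * Real.tan (Real.pi / (2 * n))) ^ 2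
    let b : ℕ → ℝ := fun n => 1 / (2 * (1 - (Real.pi / (2 * n)) * Real.cot (Real.pi / (2 * n))))
    (∀ n : ℕ, 2 ≤ n → a (n + 1) < a n) ∧
      (∀ n : ℕ, 2 ≤ n → b n < b (n + 1)) ∧
      a 3 < b 3 := by
  intro a b
  have hpi := Real.pi_pos
  -- basic facts about x_n = π / (2n)
  have hx0 : ∀ n : ℕ, 2 ≤ n → 0 < π / (2 * (n : ℝ)) := by
    intro n hn
    have : (2 : ℝ) ≤ (n : ℝ) := by exact_mod_cast hn
    positivity
  have hxlt : ∀ n : ℕ, 2 ≤ n → π / (2 * (n : ℝ)) < π / 2 := by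
    intro n hn
    have h2 : (2 : ℝ) ≤ (n : ℝ) := by exact_mod_cast hn
    apply div_lt_div_of_pos_left hpi (by norm_num) (by nlinarith)
  have hxdec : ∀ n : ℕ, 2 ≤ n → π / (2 * ((n : ℝ) + 1)) < π / (2 * (n : ℝ)) := by
    intro n hn
    have h2 : (2 : ℝ) ≤ (n : ℝ) := by exact_mod_cast hn
    apply div_lt_div_of_pos_left hpi (by nlinarith) (by nlinarith)
  -- rewriting a n
  have ha : ∀ n : ℕ, 2 ≤ n →
      (10 * (n : ℝ)) / (3 * π) * Real.tan (π / (2 * n))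
        = 5 / 3 * (Real.tan (π / (2 * (n : ℝ))) / (π / (2 * (n : ℝ)))) := by
    intro n hn
    have h2 : (2 : ℝ) ≤ (n : ℝ) := by exact_mod_cast hn
    have hn0 : (n : ℝ) ≠ 0 := by linarith
    field_simp
    ring
  constructor
  · -- a is strictly decreasing
    intro n hn
    have hn1 : 2 ≤ n + 1 := by omega
    have hx0' := hx0 (n + 1) hn1
    have hxlt' := hxlt n hn
    have hdec := hxdec n hn
    push_cast at hx0'
    have key := tan_div_lt_tan_div hx0' hdec hxlt'
    have h1 : (0 : ℝ) < 5 / 3 * (Real.tan (π / (2 * ((n : ℝ) + 1))) / (π / (2 * ((n : ℝ) + 1)))) := by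
      have := one_lt_tan_div hx0' (hdec.trans hxlt')
      nlinarith
    simp only [a]
    push_cast
    have e1 := ha (n + 1) hn1
    push_cast at e1
    rw [e1, ha n hn]
    exact pow_lt_pow_left₀ (mul_lt_mul_of_pos_left key (by norm_num)) h1.le (by norm_num)
  constructor
  · -- b is strictly increasing
    intro n hn
    have hn1 : 2 ≤ n + 1 := by omega
    have hx0' := hx0 (n + 1) hn1
    have hx0n := hx0 n hn
    have hxlt' := hxlt n hn
    have hdec := hxdec n hn
    push_cast at hx0'
    simp only [b]
    push_cast
    set x := π / (2 * (n : ℝ)) with hxdef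
    set y := π / (2 * ((n : ℝ) + 1)) with hydef
    have hty : 1 < Real.tan y / y := one_lt_tan_div hx0' (hdec.trans hxlt')
    have htx : 1 < Real.tan x / x := one_lt_tan_div hx0n hxlt'
    have hkey : Real.tan y / y < Real.tan x / x := tan_div_lt_tan_div hx0' hdec hxlt'
    have hux : x * Real.cot x = 1 / (Real.tan x / x) := cot_mul_eq hx0n hxlt'
    have huy : y * Real.cot y = 1 / (Real.tan y / y) := cot_mul_eq hx0' (hdec.trans hxlt')
    rw [hux, huy]
    have h1 : 1 / (Real.tan x / x) < 1 / (Real.tan y / y) :=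
      one_div_lt_one_div_of_lt (by linarith) hkey
    have h2 : 1 / (Real.tan x / x) < 1 := by
      rw [div_lt_one (by linarith)]; linarith
    have h3 : 1 / (Real.tan y / y) < 1 := by
      rw [div_lt_one (by linarith)]; linarith
    have h4 : 0 < 1 / (Real.tan y / y) := by positivity
    apply one_div_lt_one_div_of_lt <;> nlinarith
  · -- a 3 < b 3
    have hs3 : (1.732 : ℝ) < Real.sqrt 3 := by
      rw [show (1.732 : ℝ) = Real.sqrt (1.732 ^ 2) by
        rw [Real.sqrt_sq]; norm_num]
      exact Real.sqrt_lt_sqrt (by norm_num) (by norm_num)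
    have hs3' : Real.sqrt 3 < 1.7321 := by
      rw [show (1.7321 : ℝ) = Real.sqrt (1.7321 ^ 2) by
        rw [Real.sqrt_sq]; norm_num]
      exact Real.sqrt_lt_sqrt (by norm_num) (by norm_num)
    have hsq : Real.sqrt 3 ^ 2 = 3 := Real.sq_sqrt (by norm_num)
    have hpl : 3.1415 < π := by linarith [Real.pi_gt_d6]
    have hpu : π < 3.1416 := by linarith [Real.pi_lt_d6]
    simp only [a, b]
    push_cast
    have h6 : (2 * (3 : ℝ)) = 6 := by norm_num
    rw [h6]
    have hcot : Real.cot (π / 6) = Real.sqrt 3 := by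
      rw [Real.cot_eq_cos_div_sin, Real.cos_pi_div_six, Real.sin_pi_div_six]
      field_simp
    have htan : Real.tan (π / 6) = 1 / Real.sqrt 3 := Real.tan_pi_div_six
    rw [hcot, htan]
    have hs0 : (0 : ℝ) < Real.sqrt 3 := by linarith
    have hden : 0 < 2 * (1 - π / 6 * Real.sqrt 3) := by nlinarith
    have hlhs : ((10 * (3 : ℝ)) / (3 * π) * (1 / Real.sqrt 3)) ^ 2
        = 100 / (3 * π ^ 2) := by
      rw [show (10 * (3 : ℝ)) / (3 * π) * (1 / Real.sqrt 3) = 10 / (π * Real.sqrt 3) by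
        field_simp]
      rw [div_pow, mul_pow, hsq]
      ring
    rw [hlhs, div_lt_div_iff₀ (by positivity) hden]
    nlinarith
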